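/- For real t > 1, t·log(t/((t−1)·σ_t^{t−1})) = γ(1/t), where σ_t = ∏_{n=1}^∞ n^{1/t^n} is the generalized Somos constant and γ(z) = ∑_{n=1}^∞ z^{n-1}(1/n − log((n+1)/n)). -/

import Mathlib

/-- For `t > 1`: `t·log(t/((t−1)·σ_t^{t−1})) = γ(1/t)`, where `σ_t = ∏ n^{1/t^n}`. -/
theorem stmt_12 (t σ : ℝ) (ht : 1 < t) (hσpos : 0 < σ)
    (hσ : HasSum (fun n : ℕ => Real.log (n + 1) / t ^ (n + 1)) (Real.log σ)) :
    t * Real.log (t / ((t - 1) * σ ^ (t - 1)))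
      = ∑' n : ℕ, (1 / t) ^ n * (1 / (n + 1) - Real.log ((n + 2) / (n + 1))) := by
  have ht0 : (0:ℝ) < t := lt_trans one_pos ht
  have htne : t ≠ 0 := ne_of_gt ht0
  set x : ℝ := 1 / t with hxdef
  have hx0 : 0 < x := by positivity
  have hxne : x ≠ 0 := ne_of_gt hx0
  have hx1 : x < 1 := by rw [hxdef, div_lt_one ht0]; exact ht
  have hxabs : |x| < 1 := abs_lt.mpr ⟨by linarith, hx1⟩
  set L : ℝ := Real.log σ with hLdef
  -- rewrite hσ in terms of x
  have hσ' : HasSum (fun n : ℕ => Real.log (n + 1) * x ^ (n + 1)) L := by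
    convert hσ using 2 with n
    rw [hxdef]
    field_simp
    rw [mul_assoc, ← mul_pow, one_div_mul_cancel htne, one_pow, mul_one]
  -- log series
  have h1 : HasSum (fun n : ℕ => x ^ (n + 1) / (n + 1)) (-Real.log (1 - x)) :=
    Real.hasSum_pow_div_log_of_abs_lt_one hxabs
  have h1' : HasSum (fun n : ℕ => x ^ n / (n + 1)) (x⁻¹ * -Real.log (1 - x)) := by
    have := h1.mul_left x⁻¹
    convert this using 2 with n
    · rfl
    rw [pow_succ]
    field_simp
  -- shifted sigma series
  have h2 : HasSum (fun n : ℕ => Real.log (n + 1) * x ^ n) (x⁻¹ * L) := by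
    have := hσ'.mul_left x⁻¹
    convert this using 2 with n
    · rfl
    rw [pow_succ]
    field_simp
  have h3' : HasSum (fun n : ℕ => Real.log (n + 2) * x ^ (n + 1)) (x⁻¹ * L) := by
    have h3 := (hasSum_nat_add_iff'
      (f := fun n : ℕ => Real.log (n + 1) * x ^ n) 1).mpr h2
    simp only [Finset.range_one, Finset.sum_singleton] at h3
    norm_num at h3
    convert h3 using 2 with n
    · rfl
    ring_nf
  have h4 : HasSum (fun n : ℕ => Real.log (n + 2) * x ^ (n + 1) -
      Real.log (n + 1) * x ^ (n + 1)) (x⁻¹ * L - L) := h3'.sub hσ'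
  have h5 : HasSum (fun n : ℕ => x ^ n * (Real.log (n + 2) - Real.log (n + 1)))
      (x⁻¹ * (x⁻¹ * L - L)) := by
    have := h4.mul_left x⁻¹
    convert this using 2 with n
    · rfl
    field_simp
    ring
  -- combine
  have hfin : HasSum (fun n : ℕ => (1 / t) ^ n * (1 / (n + 1) - Real.log ((n + 2) / (n + 1))))
      (x⁻¹ * -Real.log (1 - x) - x⁻¹ * (x⁻¹ * L - L)) := by
    have := h1'.sub h5
    convert this using 2 with n
    · rfl
    have hn1 : ((n : ℝ) + 1) ≠ 0 := by positivity
    have hn2 : ((n : ℝ) + 2) ≠ 0 := by positivity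
    rw [Real.log_div hn2 hn1, ← hxdef]
    ring
  rw [hfin.tsum_eq]
  -- now pure computation
  have ht1ne : t - 1 ≠ 0 := by linarith
  have hxinv : x⁻¹ = t := by rw [hxdef]; field_simp
  have h1mx : 1 - x = (t - 1) / t := by rw [hxdef]; field_simp
  have hrpowne : σ ^ (t - 1) ≠ 0 := by positivity
  rw [Real.log_div htne (mul_ne_zero ht1ne hrpowne), Real.log_mul ht1ne hrpowne,
    Real.log_rpow hσpos, hxinv, h1mx, Real.log_div ht1ne htne, ← hLdef]
  ring
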